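/- (Corollary 5.2, stationarity of constant-parameter product measure.) Let θ ∈ ℝ with Z(θ) convergent, let μ^{(θ)} denote the product probability measure on ℤ^ℤ all of whose marginals equal the single-site measure μ^{(θ)}, and let φ : ℤ^ℤ → ℝ be bounded and measurable, depending only on the coordinates ω_l, …, ω_r for some integers l ≤ r. Then ∑_{i=l−1}^{r} ∫ (r(ω_i)+r(−ω_{i+1}))·(φ(ω^{(i,i+1)}) − φ(ω)) dμ^{(θ)}(ω) = 0. -/

import Mathlib

open Real MeasureTheory

/-- The generalized factorial `r(z)! := ∏_{y=1}^{|z|} r(y)`. -/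
noncomputable def rfact (r : ℤ → ℝ) (z : ℤ) : ℝ :=
  ∏ y ∈ Finset.range z.natAbs, r (y + 1)

/-- The partition function `Z(θ) := ∑_{z ∈ ℤ} e^{θ z} / r(z)!`. -/
noncomputable def Zfun (r : ℤ → ℝ) (θ : ℝ) : ℝ :=
  ∑' z : ℤ, Real.exp (θ * z) / rfact r z

/-- The single-site probability mass function `μ^{(θ)}(z) := e^{θ z} / (Z(θ) r(z)!)`. -/
noncomputable def mu (r : ℤ → ℝ) (θ : ℝ) (z : ℤ) : ℝ :=
  Real.exp (θ * z) / (Zfun r θ * rfact r z)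

/-- `ω^{(i,i+1)}`: a brick is laid on the column over `(i, i+1)`; coordinate `i`
decreases by one and coordinate `i+1` increases by one. -/
def brickCfg (ω : ℤ → ℤ) (i : ℤ) : ℤ → ℤ :=
  fun j => if j = i then ω i - 1 else if j = i + 1 then ω (i + 1) + 1 else ω j

/-- `ω^{(i,+)}`: only coordinate `i` is changed, to `ω i + 1`. -/
def upCfg (ω : ℤ → ℤ) (i : ℤ) : ℤ → ℤ := Function.update ω i (ω i + 1)

/-- `ω^{(i,-)}`: only coordinate `i` is changed, to `ω i - 1`. -/
def downCfg (ω : ℤ → ℤ) (i : ℤ) : ℤ → ℤ := Function.update ω i (ω i - 1)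

/-- `IsProductMeasure r η P` means: `P` is the product probability measure on `ℤ^ℤ`
whose `i`-th marginal is the single-site measure `μ^{(η i)}`, characterized by its
values on cylinder sets. -/
def IsProductMeasure (r : ℤ → ℝ) (η : ℤ → ℝ) (P : Measure (ℤ → ℤ)) : Prop :=
  IsProbabilityMeasure P ∧
    ∀ (s : Finset ℤ) (c : ℤ → ℤ),
      P {ω : ℤ → ℤ | ∀ i ∈ s, ω i = c i} = ∏ i ∈ s, ENNReal.ofReal (mu r (η i) (c i))

/-! ### Auxiliary lemmas -/

lemma rfact_pos (r : ℤ → ℝ) (hpos : ∀ z : ℤ, 0 < r z) (z : ℤ) : 0 < rfact r z :=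
  Finset.prod_pos fun _ _ => hpos _

lemma rfact_step (r : ℤ → ℝ) (hrel : ∀ z : ℤ, r z * r (-z + 1) = 1)
    (z : ℤ) : rfact r z = r z * rfact r (z - 1) := by
  rcases le_or_gt 1 z with h | h
  · have h1 : z.natAbs = (z - 1).natAbs + 1 := by omega
    unfold rfact
    rw [h1, Finset.prod_range_succ]
    have h2 : (((z - 1).natAbs : ℤ) + 1) = z := by omega
    rw [h2, mul_comm]
  · have h1 : (z - 1).natAbs = z.natAbs + 1 := by omega
    unfold rfact
    rw [h1, Finset.prod_range_succ]
    have h2 : ((z.natAbs : ℤ) + 1) = -z + 1 := by omega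
    rw [h2, mul_comm (r z), mul_assoc, mul_comm (r (-z+1)), hrel z, mul_one]

lemma Zfun_pos (r : ℤ → ℝ) (hpos : ∀ z : ℤ, 0 < r z) (θ : ℝ)
    (hZ : Summable (fun z : ℤ => Real.exp (θ * z) / rfact r z)) : 0 < Zfun r θ :=
  Summable.tsum_pos hZ (fun z => div_nonneg (Real.exp_pos _).le (rfact_pos r hpos z).le) 0
    (div_pos (Real.exp_pos _) (rfact_pos r hpos 0))

lemma mu_pos (r : ℤ → ℝ) (hpos : ∀ z : ℤ, 0 < r z) (θ : ℝ)
    (hZ : Summable (fun z : ℤ => Real.exp (θ * z) / rfact r z)) (z : ℤ) : 0 < mu r θ z := by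
  have := Zfun_pos r hpos θ hZ
  have := rfact_pos r hpos z
  unfold mu; positivity

lemma mu_step (r : ℤ → ℝ) (hpos : ∀ z : ℤ, 0 < r z)
    (hrel : ∀ z : ℤ, r z * r (-z + 1) = 1) (θ : ℝ)
    (hZ : Summable (fun z : ℤ => Real.exp (θ * z) / rfact r z)) (z : ℤ) :
    r z * mu r θ z = Real.exp θ * mu r θ (z - 1) := by
  have hZ0 := (Zfun_pos r hpos θ hZ).ne'
  have h1 := (rfact_pos r hpos z).ne'
  have h2 := (rfact_pos r hpos (z - 1)).ne'
  have h3 := (hpos z).ne'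
  unfold mu
  rw [rfact_step r hrel z]
  have he : Real.exp (θ * z) = Real.exp θ * Real.exp (θ * (z - 1)) := by
    rw [← Real.exp_add]; ring_nf
  rw [he, Int.cast_sub, Int.cast_one]
  field_simp

lemma mu_step_neg (r : ℤ → ℝ) (hpos : ∀ z : ℤ, 0 < r z)
    (hrel : ∀ z : ℤ, r z * r (-z + 1) = 1) (θ : ℝ)
    (hZ : Summable (fun z : ℤ => Real.exp (θ * z) / rfact r z)) (z : ℤ) :
    r (-z) * mu r θ z = Real.exp (-θ) * mu r θ (z - (-1)) := by
  have h := mu_step r hpos hrel θ hZ (z + 1)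
  have h1 : z + 1 - 1 = z := by ring
  rw [h1] at h
  have h2 : r (z + 1) * r (-z) = 1 := by
    have := hrel (z + 1); rwa [show -(z+1)+1 = -z by ring] at this
  have h3 : z - (-1) = z + 1 := by ring
  rw [h3]
  have hexp : Real.exp (-θ) * Real.exp θ = 1 := by
    rw [← Real.exp_add]; simp
  calc r (-z) * mu r θ z
      = Real.exp (-θ) * (Real.exp θ * mu r θ z) * r (-z) := by
        rw [← mul_assoc, hexp, one_mul]; ring
    _ = Real.exp (-θ) * (r (z+1) * mu r θ (z+1)) * r (-z) := by rw [← h]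
    _ = Real.exp (-θ) * mu r θ (z+1) * (r (z+1) * r (-z)) := by ring
    _ = Real.exp (-θ) * mu r θ (z+1) := by rw [h2, mul_one]

lemma mu_summable (r : ℤ → ℝ) (θ : ℝ)
    (hZ : Summable (fun z : ℤ => Real.exp (θ * z) / rfact r z)) :
    Summable (fun z : ℤ => mu r θ z) := by
  refine (hZ.div_const (Zfun r θ)).congr fun z => ?_
  unfold mu; rw [div_div, mul_comm (rfact r z)]

lemma mu_tsum_one (r : ℤ → ℝ) (hpos : ∀ z : ℤ, 0 < r z) (θ : ℝ)
    (hZ : Summable (fun z : ℤ => Real.exp (θ * z) / rfact r z)) :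
    ∑' z : ℤ, mu r θ z = 1 := by
  have h : ∀ z : ℤ, mu r θ z = Real.exp (θ * z) / rfact r z / Zfun r θ := by
    intro z; unfold mu; rw [div_div, mul_comm (rfact r z)]
  rw [tsum_congr h, tsum_div_const]
  exact div_self (Zfun_pos r hpos θ hZ).ne'

lemma mu_tsum_one' (r : ℤ → ℝ) (hpos : ∀ z : ℤ, 0 < r z) (θ : ℝ)
    (hZ : Summable (fun z : ℤ => Real.exp (θ * z) / rfact r z)) :
    ∑' z : ℤ, ENNReal.ofReal (mu r θ z) = 1 := by
  rw [← ENNReal.ofReal_tsum_of_nonneg (fun z => (mu_pos r hpos θ hZ z).le) (mu_summable r θ hZ),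
    mu_tsum_one r hpos θ hZ, ENNReal.ofReal_one]

lemma weighted_tsum (r : ℤ → ℝ) (hpos : ∀ z : ℤ, 0 < r z) (θ : ℝ)
    (hZ : Summable (fun z : ℤ => Real.exp (θ * z) / rfact r z))
    (ρ : ℤ → ℝ) (K : ℝ) (ε : ℤ) (hK : 0 ≤ K)
    (hid : ∀ z : ℤ, ρ z * mu r θ z = K * mu r θ (z - ε)) :
    ∑' z : ℤ, ENNReal.ofReal (ρ z * mu r θ z) = ENNReal.ofReal K := by
  calc ∑' z : ℤ, ENNReal.ofReal (ρ z * mu r θ z)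
      = ∑' z : ℤ, ENNReal.ofReal K * ENNReal.ofReal (mu r θ (z - ε)) := by
        refine tsum_congr fun z => ?_
        rw [hid z, ENNReal.ofReal_mul hK]
    _ = ENNReal.ofReal K * ∑' z : ℤ, ENNReal.ofReal (mu r θ (z - ε)) := ENNReal.tsum_mul_left
    _ = ENNReal.ofReal K * ∑' z : ℤ, ENNReal.ofReal (mu r θ z) := by
        exact (Equiv.subRight ε).tsum_eq (fun z => ENNReal.ofReal (mu r θ z)) ▸ rfl
    _ = ENNReal.ofReal K := by rw [mu_tsum_one' r hpos θ hZ, mul_one]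

/-! ### Cylinder sets -/

def cyl (s : Finset ℤ) (c : ℤ → ℤ) : Set (ℤ → ℤ) := {ω | ∀ j ∈ s, ω j = c j}

lemma cyl_meas (s : Finset ℤ) (c : ℤ → ℤ) : MeasurableSet (cyl s c) := by
  have h : cyl s c = ⋂ j ∈ s, (fun ω : ℤ → ℤ => ω j) ⁻¹' {c j} := by
    ext ω; simp [cyl]
  rw [h]
  exact MeasurableSet.biInter s.countable_toSet
    (fun j _ => measurable_pi_apply j (measurableSet_singleton _))

lemma pi_eq_genFrom :
    (inferInstance : MeasurableSpace (ℤ → ℤ)) =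
      MeasurableSpace.generateFrom {S | ∃ s c, S = cyl s c} := by
  apply le_antisymm
  · refine iSup_le fun j => ?_
    rintro S ⟨T, -, rfl⟩
    have h : (fun ω : ℤ → ℤ => ω j) ⁻¹' T = ⋃ z ∈ T, cyl {j} (fun _ => z) := by
      ext ω; simp [cyl]
    rw [h]
    exact MeasurableSet.biUnion T.to_countable
      (fun z _ => MeasurableSpace.measurableSet_generateFrom ⟨{j}, fun _ => z, rfl⟩)
  · refine MeasurableSpace.generateFrom_le ?_
    rintro S ⟨s, c, rfl⟩
    exact cyl_meas s c

lemma isPiSystem_cyl : IsPiSystem {S : Set (ℤ → ℤ) | ∃ s c, S = cyl s c} := by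
  rintro S ⟨s, c, rfl⟩ T ⟨t, d, rfl⟩ ⟨ω₀, h1, h2⟩
  refine ⟨s ∪ t, ω₀, ?_⟩
  ext ω
  simp only [cyl, Set.mem_inter_iff, Set.mem_setOf_eq, Finset.mem_union] at *
  constructor
  · rintro ⟨ha, hb⟩ j hj
    rcases hj with hj | hj
    · rw [ha j hj, ← h1 j hj]
    · rw [hb j hj, ← h2 j hj]
  · intro h
    exact ⟨fun j hj => by rw [h j (Or.inl hj), h1 j hj],
           fun j hj => by rw [h j (Or.inr hj), h2 j hj]⟩

lemma meas_update (i : ℤ) (g : ℤ → ℤ) :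
    Measurable (fun ω : ℤ → ℤ => Function.update ω i (g (ω i))) := by
  refine measurable_pi_lambda _ fun j => ?_
  by_cases h : j = i
  · subst h
    simp only [Function.update_self]
    have : Measurable (fun z : ℤ => g z) := fun _ _ => trivial
    exact this.comp (measurable_pi_apply j)
  · simp only [Function.update_of_ne h]
    exact measurable_pi_apply j

/-! ### The key change-of-variables identity for the product measure -/

lemma core_measure (r : ℤ → ℝ) (hpos : ∀ z : ℤ, 0 < r z) (θ : ℝ)
    (hZ : Summable (fun z : ℤ => Real.exp (θ * z) / rfact r z))
    (P : Measure (ℤ → ℤ)) (hP : IsProductMeasure r (fun _ => θ) P)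
    (ρ : ℤ → ℝ) (K : ℝ) (ε : ℤ) (hK : 0 ≤ K) (hρ : ∀ z, 0 ≤ ρ z)
    (hid : ∀ z : ℤ, ρ z * mu r θ z = K * mu r θ (z - ε)) (i : ℤ) :
    (P.withDensity (fun ω => ENNReal.ofReal (ρ (ω i)))).map
        (fun ω => Function.update ω i (ω i - ε)) = ENNReal.ofReal K • P := by
  haveI : IsProbabilityMeasure P := hP.1
  haveI : IsFiniteMeasure (ENNReal.ofReal K • P) := by
    constructor
    simp only [Measure.smul_apply, smul_eq_mul, measure_univ, mul_one]
    exact ENNReal.ofReal_lt_top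
  have hT : Measurable (fun ω : ℤ → ℤ => Function.update ω i (ω i - ε)) :=
    meas_update i (fun z => z - ε)
  have key : ∀ (s : Finset ℤ) (c : ℤ → ℤ),
      ((P.withDensity (fun ω => ENNReal.ofReal (ρ (ω i)))).map
        (fun ω => Function.update ω i (ω i - ε))) (cyl s c)
        = ENNReal.ofReal K * P (cyl s c) := by
    intro s c
    rw [Measure.map_apply hT (cyl_meas s c)]
    by_cases hi : i ∈ s
    · have hpre : (fun ω : ℤ → ℤ => Function.update ω i (ω i - ε)) ⁻¹' cyl s c
          = cyl s (Function.update c i (c i + ε)) := by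
        ext ω
        simp only [cyl, Set.mem_preimage, Set.mem_setOf_eq]
        constructor
        · intro h j hj
          by_cases hji : j = i
          · subst hji
            have := h j hj
            rw [Function.update_self] at this ⊢
            omega
          · have := h j hj
            rwa [Function.update_of_ne hji] at this ⊢
        · intro h j hj
          by_cases hji : j = i
          · subst hji
            have := h j hj
            rw [Function.update_self] at this ⊢
            omega
          · have := h j hj
            rwa [Function.update_of_ne hji] at this ⊢
      rw [hpre, withDensity_apply _ (cyl_meas _ _)]
      have hconst : ∀ ω ∈ cyl s (Function.update c i (c i + ε)),
          ENNReal.ofReal (ρ (ω i)) = ENNReal.ofReal (ρ (c i + ε)) := by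
        intro ω hω
        have := hω i hi
        rw [Function.update_self] at this
        rw [this]
      rw [setLIntegral_congr_fun (cyl_meas _ _) hconst, setLIntegral_const]
      have hPc : P (cyl s (Function.update c i (c i + ε)))
          = ∏ j ∈ s, ENNReal.ofReal (mu r θ (Function.update c i (c i + ε) j)) :=
        hP.2 s _
      have hPc2 : P (cyl s c) = ∏ j ∈ s, ENNReal.ofReal (mu r θ (c j)) := hP.2 s c
      rw [hPc, hPc2,
        ← Finset.mul_prod_erase s
          (fun j => ENNReal.ofReal (mu r θ (Function.update c i (c i + ε) j))) hi,
        ← Finset.mul_prod_erase s (fun j => ENNReal.ofReal (mu r θ (c j))) hi]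
      have herase : ∏ j ∈ s.erase i, ENNReal.ofReal (mu r θ (Function.update c i (c i + ε) j))
          = ∏ j ∈ s.erase i, ENNReal.ofReal (mu r θ (c j)) :=
        Finset.prod_congr rfl fun j hj => by
          rw [Function.update_of_ne (Finset.ne_of_mem_erase hj)]
      rw [herase, Function.update_self, ← mul_assoc, ← mul_assoc,
        ← ENNReal.ofReal_mul (hρ _), hid (c i + ε), add_sub_cancel_right,
        ENNReal.ofReal_mul hK]
    · have hpre : (fun ω : ℤ → ℤ => Function.update ω i (ω i - ε)) ⁻¹' cyl s c = cyl s c := by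
        ext ω
        simp only [cyl, Set.mem_preimage, Set.mem_setOf_eq]
        constructor <;> intro h j hj <;> have hji : j ≠ i := fun e => hi (e ▸ hj) <;>
          have := h j hj
        · rwa [Function.update_of_ne hji] at this
        · rwa [Function.update_of_ne hji]
      have hdecomp : cyl s c = ⋃ z : ℤ, cyl (insert i s) (Function.update c i z) := by
        ext ω
        simp only [cyl, Set.mem_setOf_eq, Set.mem_iUnion, Finset.mem_insert]
        constructor
        · intro h
          refine ⟨ω i, fun j hj => ?_⟩
          rcases hj with rfl | hj
          · rw [Function.update_self]
          · have hji : j ≠ i := fun e => hi (e ▸ hj)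
            rw [Function.update_of_ne hji]; exact h j hj
        · rintro ⟨z, hz⟩ j hj
          have hji : j ≠ i := fun e => hi (e ▸ hj)
          have := hz j (Or.inr hj)
          rwa [Function.update_of_ne hji] at this
      have hdisj : Pairwise (Function.onFun Disjoint fun z : ℤ =>
          cyl (insert i s) (Function.update c i z)) := by
        intro z w hzw
        simp only [Function.onFun, Set.disjoint_left]
        intro ω h1 h2
        have e1 := h1 i (Finset.mem_insert_self i s)
        have e2 := h2 i (Finset.mem_insert_self i s)
        rw [Function.update_self] at e1 e2
        exact hzw (e1 ▸ e2 ▸ rfl)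
      rw [hpre, withDensity_apply _ (cyl_meas _ _), hdecomp,
        lintegral_iUnion (fun z => cyl_meas _ _) hdisj]
      have hterm : ∀ z : ℤ,
          ∫⁻ ω in cyl (insert i s) (Function.update c i z), ENNReal.ofReal (ρ (ω i)) ∂P
          = ENNReal.ofReal (ρ z * mu r θ z) * ∏ j ∈ s, ENNReal.ofReal (mu r θ (c j)) := by
        intro z
        have hconst : ∀ ω ∈ cyl (insert i s) (Function.update c i z),
            ENNReal.ofReal (ρ (ω i)) = ENNReal.ofReal (ρ z) := by
          intro ω hω
          have := hω i (Finset.mem_insert_self i s)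
          rw [Function.update_self] at this
          rw [this]
        rw [setLIntegral_congr_fun (cyl_meas _ _) hconst, setLIntegral_const]
        have hPc : P (cyl (insert i s) (Function.update c i z))
            = ∏ j ∈ insert i s, ENNReal.ofReal (mu r θ (Function.update c i z j)) := hP.2 _ _
        rw [hPc, Finset.prod_insert hi, Function.update_self]
        have herase : ∏ j ∈ s, ENNReal.ofReal (mu r θ (Function.update c i z j))
            = ∏ j ∈ s, ENNReal.ofReal (mu r θ (c j)) :=
          Finset.prod_congr rfl fun j hj => by
            have hji : j ≠ i := fun e => hi (by rw [← e]; exact hj)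
            rw [Function.update_of_ne hji]
        rw [herase, ENNReal.ofReal_mul (hρ _), ← mul_assoc, mul_comm (ENNReal.ofReal (ρ z))]
      rw [tsum_congr hterm, ENNReal.tsum_mul_right,
        weighted_tsum r hpos θ hZ ρ K ε hK hid, ← hdecomp,
        show P (cyl s c) = _ from hP.2 s c]
  refine (MeasureTheory.ext_of_generate_finite _ pi_eq_genFrom isPiSystem_cyl ?_ ?_).symm
  · rintro S ⟨s, c, rfl⟩
    rw [key s c]; rfl
  · have huniv : (Set.univ : Set (ℤ → ℤ)) = cyl ∅ (fun _ => 0) := by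
      ext ω; simp [cyl]
    rw [huniv, key ∅ (fun _ => 0)]; rfl

lemma core_integral (r : ℤ → ℝ) (hpos : ∀ z : ℤ, 0 < r z) (θ : ℝ)
    (hZ : Summable (fun z : ℤ => Real.exp (θ * z) / rfact r z))
    (P : Measure (ℤ → ℤ)) (hP : IsProductMeasure r (fun _ => θ) P)
    (ρ : ℤ → ℝ) (K : ℝ) (ε : ℤ) (hK : 0 ≤ K) (hρ : ∀ z, 0 ≤ ρ z)
    (hid : ∀ z : ℤ, ρ z * mu r θ z = K * mu r θ (z - ε)) (i : ℤ)
    (f : (ℤ → ℤ) → ℝ) (hf : Measurable f) (M : ℝ) (hM : ∀ ω, |f ω| ≤ M) :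
    Integrable (fun ω => ρ (ω i) * f (Function.update ω i (ω i - ε))) P ∧
    ∫ ω, ρ (ω i) * f (Function.update ω i (ω i - ε)) ∂P = K * ∫ ω, f ω ∂P := by
  haveI : IsProbabilityMeasure P := hP.1
  set T : (ℤ → ℤ) → (ℤ → ℤ) := fun ω => Function.update ω i (ω i - ε) with hTdef
  have hT : Measurable T := meas_update i (fun z => z - ε)
  set w : (ℤ → ℤ) → NNReal := fun ω => (ρ (ω i)).toNNReal with hwdef
  have hw : Measurable w := by
    have h1 : Measurable (fun z : ℤ => (ρ z).toNNReal) := fun _ _ => trivial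
    exact h1.comp (measurable_pi_apply i)
  have hco : (fun ω : ℤ → ℤ => ((w ω : NNReal) : ENNReal)) =
      (fun ω => ENNReal.ofReal (ρ (ω i))) := rfl
  have hmap : (P.withDensity fun ω => ((w ω : NNReal) : ENNReal)).map T
      = ENNReal.ofReal K • P := by
    rw [hco]; exact core_measure r hpos θ hZ P hP ρ K ε hK hρ hid i
  haveI : IsFiniteMeasure (ENNReal.ofReal K • P) := by
    constructor
    simp only [Measure.smul_apply, smul_eq_mul, measure_univ, mul_one]
    exact ENNReal.ofReal_lt_top
  have hfint : Integrable f ((P.withDensity fun ω => ((w ω : NNReal) : ENNReal)).map T) := by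
    rw [hmap]
    refine (integrable_const M).mono' hf.aestronglyMeasurable (ae_of_all _ fun ω => ?_)
    rw [Real.norm_eq_abs]; exact hM ω
  have h1 : Integrable (f ∘ T) (P.withDensity fun ω => ((w ω : NNReal) : ENNReal)) :=
    (integrable_map_measure hf.aestronglyMeasurable hT.aemeasurable).mp hfint
  have h2 : Integrable (fun ω => w ω • f (T ω)) P :=
    (integrable_withDensity_iff_integrable_smul hw).mp h1
  have heq : (fun ω => w ω • f (T ω))
      = (fun ω => ρ (ω i) * f (Function.update ω i (ω i - ε))) := by
    funext ω
    simp only [NNReal.smul_def, smul_eq_mul, hwdef, Real.coe_toNNReal _ (hρ _), hTdef]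
  constructor
  · rw [← heq]; exact h2
  · calc ∫ ω, ρ (ω i) * f (Function.update ω i (ω i - ε)) ∂P
        = ∫ ω, w ω • f (T ω) ∂P := by rw [heq]
      _ = ∫ ω, f (T ω) ∂(P.withDensity fun ω => ((w ω : NNReal) : ENNReal)) :=
          (integral_withDensity_eq_integral_smul hw _).symm
      _ = ∫ ω, f ω ∂((P.withDensity fun ω => ((w ω : NNReal) : ENNReal)).map T) :=
          (integral_map hT.aemeasurable hfint.aestronglyMeasurable).symm
      _ = ∫ ω, f ω ∂(ENNReal.ofReal K • P) := by rw [hmap]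
      _ = K * ∫ ω, f ω ∂P := by
          rw [integral_smul_measure, ENNReal.toReal_ofReal hK, smul_eq_mul]

/-! ### Configuration identities -/

lemma brick_eq_up_down (ω : ℤ → ℤ) (i : ℤ) :
    brickCfg ω i = upCfg (Function.update ω i (ω i - 1)) (i + 1) := by
  funext j
  simp only [brickCfg, upCfg, Function.update]
  split_ifs with h1 h2 h3 <;> simp_all <;> omega

lemma brick_eq_down_up (ω : ℤ → ℤ) (i : ℤ) :
    brickCfg ω i = downCfg (Function.update ω (i+1) (ω (i+1) - (-1))) i := by
  have hne : i ≠ i + 1 := by omega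
  funext j
  show (if j = i then ω i - 1 else if j = i + 1 then ω (i + 1) + 1 else ω j) = _
  rcases eq_or_ne j i with rfl | h1
  · rw [if_pos rfl]
    simp only [downCfg]
    rw [Function.update_self, Function.update_of_ne hne]
  · rcases eq_or_ne j (i + 1) with rfl | h2
    · rw [if_neg h1, if_pos rfl]
      simp only [downCfg]
      rw [Function.update_of_ne (Ne.symm hne), Function.update_self]
      ring
    · rw [if_neg h1, if_neg h2]
      simp only [downCfg]
      rw [Function.update_of_ne h1, Function.update_of_ne h2]

lemma up_down (ω : ℤ → ℤ) (i : ℤ) :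
    upCfg (Function.update ω i (ω i - 1)) i = ω := by
  funext j
  simp only [upCfg, Function.update]
  split_ifs with h1 <;> simp_all

lemma down_up (ω : ℤ → ℤ) (i : ℤ) :
    downCfg (Function.update ω i (ω i - (-1))) i = ω := by
  funext j
  simp only [downCfg, Function.update]
  split_ifs with h1 <;> simp_all

lemma telescope (g : ℤ → ℝ) (m n : ℤ) (h : m - 1 ≤ n) :
    ∑ i ∈ Finset.Icc m n, (g (i + 1) - g i) = g (n + 1) - g m := by
  set N : ℕ := (n + 1 - m).toNat with hNdef
  have hN : (m : ℤ) + (N : ℤ) = n + 1 := by omega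
  have hinj : Function.Injective (fun k : ℕ => m + (k : ℤ)) := by
    intro x y hxy; simpa using hxy
  have hmap : Finset.Icc m n =
      (Finset.range N).map ⟨fun k : ℕ => m + (k : ℤ), hinj⟩ := by
    ext x
    simp only [Finset.mem_Icc, Finset.mem_map, Finset.mem_range,
      Function.Embedding.coeFn_mk]
    constructor
    · rintro ⟨h1, h2⟩
      exact ⟨(x - m).toNat, by omega, by omega⟩
    · rintro ⟨k, hk, rfl⟩
      omega
  rw [hmap, Finset.sum_map]
  simp only [Function.Embedding.coeFn_mk]
  calc ∑ k ∈ Finset.range N, (g (m + (k : ℤ) + 1) - g (m + (k : ℤ)))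
      = ∑ k ∈ Finset.range N, (g (m + ((k + 1 : ℕ) : ℤ)) - g (m + (k : ℤ))) := by
        refine Finset.sum_congr rfl fun k _ => ?_
        have : m + (k : ℤ) + 1 = m + ((k + 1 : ℕ) : ℤ) := by push_cast; ring
        rw [this]
    _ = g (m + (N : ℤ)) - g (m + ((0 : ℕ) : ℤ)) :=
        Finset.sum_range_sub (fun k : ℕ => g (m + (k : ℤ))) N
    _ = g (n + 1) - g m := by rw [hN]; norm_num

/-! ### Main theorem -/

theorem stationarity_constant_parameter (r : ℤ → ℝ) (hpos : ∀ z : ℤ, 0 < r z)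
    (hrel : ∀ z : ℤ, r z * r (-z + 1) = 1)
    (θ : ℝ) (hZ : Summable (fun z : ℤ => Real.exp (θ * z) / rfact r z))
    (P : Measure (ℤ → ℤ)) (hP : IsProductMeasure r (fun _ => θ) P)
    (φ : (ℤ → ℤ) → ℝ) (hmeas : Measurable φ) (hbdd : ∃ M : ℝ, ∀ ω, |φ ω| ≤ M)
    (a b : ℤ) (hab : a ≤ b)
    (hdep : ∀ ω ω' : ℤ → ℤ, (∀ i : ℤ, a ≤ i → i ≤ b → ω i = ω' i) → φ ω = φ ω') :
    (∑ i ∈ Finset.Icc (a - 1) b,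
        ∫ ω, (r (ω i) + r (-(ω (i + 1)))) * (φ (brickCfg ω i) - φ ω) ∂P) = 0 := by
  obtain ⟨M, hM⟩ := hbdd
  have hrnn : ∀ z : ℤ, 0 ≤ r z := fun z => (hpos z).le
  have hrneg : ∀ z : ℤ, 0 ≤ r (-z) := fun z => (hpos _).le
  have hid1 : ∀ z : ℤ, r z * mu r θ z = Real.exp θ * mu r θ (z - 1) :=
    mu_step r hpos hrel θ hZ
  have hid2 : ∀ z : ℤ, r (-z) * mu r θ z = Real.exp (-θ) * mu r θ (z - (-1)) :=
    mu_step_neg r hpos hrel θ hZ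
  -- measurable bounded auxiliary functions
  have hupmeas : ∀ j : ℤ, Measurable (fun ω : ℤ → ℤ => φ (upCfg ω j)) :=
    fun j => hmeas.comp (meas_update j (fun z => z + 1))
  have hdownmeas : ∀ j : ℤ, Measurable (fun ω : ℤ → ℤ => φ (downCfg ω j)) :=
    fun j => hmeas.comp (meas_update j (fun z => z - 1))
  have hupbdd : ∀ j (ω : ℤ → ℤ), |φ (upCfg ω j)| ≤ M := fun j ω => hM _
  have hdownbdd : ∀ j (ω : ℤ → ℤ), |φ (downCfg ω j)| ≤ M := fun j ω => hM _
  set Φu : ℤ → ℝ := fun j => ∫ ω, φ (upCfg ω j) ∂P with hΦu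
  set Φd : ℤ → ℝ := fun j => ∫ ω, φ (downCfg ω j) ∂P with hΦd
  set G : ℤ → ℝ := fun j => Real.exp θ * Φu j - Real.exp (-θ) * Φd j with hG
  have key : ∀ i : ℤ,
      ∫ ω, (r (ω i) + r (-(ω (i + 1)))) * (φ (brickCfg ω i) - φ ω) ∂P = G (i+1) - G i := by
    intro i
    -- four applications of core_integral
    have h1 := core_integral r hpos θ hZ P hP r (Real.exp θ) 1 (Real.exp_pos θ).le hrnn
      (by simpa using hid1) i (fun ω => φ (upCfg ω (i+1))) (hupmeas (i+1)) M (hupbdd (i+1))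
    have h2 := core_integral r hpos θ hZ P hP (fun z => r (-z)) (Real.exp (-θ)) (-1)
      (Real.exp_pos _).le hrneg hid2 (i+1) (fun ω => φ (downCfg ω i)) (hdownmeas i) M
      (hdownbdd i)
    have h3 := core_integral r hpos θ hZ P hP r (Real.exp θ) 1 (Real.exp_pos θ).le hrnn
      (by simpa using hid1) i (fun ω => φ (upCfg ω i)) (hupmeas i) M (hupbdd i)
    have h4 := core_integral r hpos θ hZ P hP (fun z => r (-z)) (Real.exp (-θ)) (-1)
      (Real.exp_pos _).le hrneg hid2 (i+1) (fun ω => φ (downCfg ω (i+1))) (hdownmeas (i+1)) M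
      (hdownbdd (i+1))
    -- rewrite the integrands
    have e1 : (fun ω : ℤ → ℤ => r (ω i) * φ (upCfg (Function.update ω i (ω i - 1)) (i+1)))
        = (fun ω : ℤ → ℤ => r (ω i) * φ (brickCfg ω i)) := by
      funext ω; rw [← brick_eq_up_down]
    have e2 : (fun ω : ℤ → ℤ =>
          r (-(ω (i+1))) * φ (downCfg (Function.update ω (i+1) (ω (i+1) - (-1))) i))
        = (fun ω : ℤ → ℤ => r (-(ω (i+1))) * φ (brickCfg ω i)) := by
      funext ω; rw [← brick_eq_down_up]
    have e3 : (fun ω : ℤ → ℤ => r (ω i) * φ (upCfg (Function.update ω i (ω i - 1)) i))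
        = (fun ω : ℤ → ℤ => r (ω i) * φ ω) := by
      funext ω; rw [up_down]
    have e4 : (fun ω : ℤ → ℤ =>
          r (-(ω (i+1))) * φ (downCfg (Function.update ω (i+1) (ω (i+1) - (-1))) (i+1)))
        = (fun ω : ℤ → ℤ => r (-(ω (i+1))) * φ ω) := by
      funext ω; rw [down_up]
    rw [e1] at h1
    rw [e2] at h2
    rw [e3] at h3
    rw [e4] at h4
    obtain ⟨int1, val1⟩ := h1
    obtain ⟨int2, val2⟩ := h2
    obtain ⟨int3, val3⟩ := h3
    obtain ⟨int4, val4⟩ := h4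
    have hsplit : (fun ω : ℤ → ℤ =>
        (r (ω i) + r (-(ω (i + 1)))) * (φ (brickCfg ω i) - φ ω))
        = (fun ω : ℤ → ℤ =>
            (r (ω i) * φ (brickCfg ω i) + r (-(ω (i+1))) * φ (brickCfg ω i))
            - (r (ω i) * φ ω + r (-(ω (i+1))) * φ ω)) := by
      funext ω; ring
    have intA : Integrable (fun ω : ℤ → ℤ =>
        r (ω i) * φ (brickCfg ω i) + r (-(ω (i+1))) * φ (brickCfg ω i)) P := int1.add int2
    have intB : Integrable (fun ω : ℤ → ℤ =>
        r (ω i) * φ ω + r (-(ω (i+1))) * φ ω) P := int3.add int4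
    rw [hsplit, integral_sub intA intB,
      integral_add int1 int2, integral_add int3 int4, val1, val2, val3, val4]
    simp only [hG]
    ring
  rw [Finset.sum_congr rfl (fun i _ => key i), telescope G (a-1) b (by omega)]
  -- boundary terms coincide
  have hup_id : ∀ j : ℤ, j < a ∨ b < j → (fun ω : ℤ → ℤ => φ (upCfg ω j)) = φ := by
    intro j hj
    funext ω
    refine hdep _ _ fun k hk1 hk2 => ?_
    have : k ≠ j := by omega
    simp only [upCfg]
    rw [Function.update_of_ne this]
  have hdown_id : ∀ j : ℤ, j < a ∨ b < j → (fun ω : ℤ → ℤ => φ (downCfg ω j)) = φ := by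
    intro j hj
    funext ω
    refine hdep _ _ fun k hk1 hk2 => ?_
    have : k ≠ j := by omega
    simp only [downCfg]
    rw [Function.update_of_ne this]
  have hu : Φu (b+1) = Φu (a-1) := by
    simp only [hΦu]
    rw [show (fun ω : ℤ → ℤ => φ (upCfg ω (b+1))) = φ from hup_id _ (Or.inr (by omega)),
      show (fun ω : ℤ → ℤ => φ (upCfg ω (a-1))) = φ from hup_id _ (Or.inl (by omega))]
  have hd : Φd (b+1) = Φd (a-1) := by
    simp only [hΦd]
    rw [show (fun ω : ℤ → ℤ => φ (downCfg ω (b+1))) = φ from hdown_id _ (Or.inr (by omega)),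
      show (fun ω : ℤ → ℤ => φ (downCfg ω (a-1))) = φ from hdown_id _ (Or.inl (by omega))]
  simp only [hG, hu, hd]
  ring
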